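/- (Converse Lyapunov theorem for exponential stability with respect to a set.) Let A ⊆ ℝⁿ be a closed set. Suppose the system x_{k+1} = f(k, x_k) is uniformly exponentially stable in D with respect to A: there exist d > 0 and λ ∈ (0,1) such that every solution with x_{k₀} = ξ ∈ D satisfies dist(x_k, A) ≤ d · dist(ξ, A) · λ^{k−k₀} for all k ≥ k₀, where dist denotes the Euclidean point-to-set distance. Then there exist a function V : ℕ → ℝⁿ → ℝ and constants c₁, c₂ > 0 and β ∈ (0,1) such that for all ξ ∈ D and all k: c₁ · dist(ξ, A)² ≤ V(k, ξ) ≤ c₂ · dist(ξ, A)² and V(k+1, f(k, ξ)) ≤ β² V(k, ξ). -/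

import Mathlib

/-- Trajectory of the system starting at `ξ` at time `k`. -/
def flowCL {n : ℕ} (f : ℕ → EuclideanSpace ℝ (Fin n) → EuclideanSpace ℝ (Fin n))
    (k : ℕ) (ξ : EuclideanSpace ℝ (Fin n)) : ℕ → EuclideanSpace ℝ (Fin n)
  | 0 => ξ
  | j + 1 => f (k + j) (flowCL f k ξ j)

theorem aux_alg_CL (β d X lam : ℝ) (hβ : β ≠ 0) (j : ℕ) :
    ((β ^ 2)⁻¹) ^ j * (d * X * lam ^ j) ^ 2 = d ^ 2 * X ^ 2 * ((lam / β) ^ 2) ^ j := by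
  field_simp
  ring

theorem flowCL_shift {n : ℕ} (f : ℕ → EuclideanSpace ℝ (Fin n) → EuclideanSpace ℝ (Fin n))
    (k : ℕ) (ξ : EuclideanSpace ℝ (Fin n)) :
    ∀ j, flowCL f (k + 1) (f k ξ) j = flowCL f k ξ (j + 1) := by
  intro j
  induction j with
  | zero => simp [flowCL]
  | succ j ih =>
      show f (k + 1 + j) (flowCL f (k+1) (f k ξ) j) = f (k + (j+1)) (flowCL f k ξ (j+1))
      rw [ih, show k + 1 + j = k + (j + 1) from by omega]

/-- Converse Lyapunov theorem for uniform exponential stability with respect to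
a closed set (Theorem 9). -/
theorem converse_lyapunov_set_stability
    (n : ℕ) (D A : Set (EuclideanSpace ℝ (Fin n)))
    (f : ℕ → EuclideanSpace ℝ (Fin n) → EuclideanSpace ℝ (Fin n))
    (d lam : ℝ)
    (hD : IsCompact D)
    (hA : IsClosed A) (hAne : A.Nonempty)
    (hinv : ∀ k, ∀ x ∈ D, f k x ∈ D)
    (hd : 0 < d) (hlam : 0 < lam ∧ lam < 1)
    (hES : ∀ (k₀ : ℕ) (x : ℕ → EuclideanSpace ℝ (Fin n)), x k₀ ∈ D →
      (∀ k, k₀ ≤ k → x (k + 1) = f k (x k)) →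
      ∀ k, k₀ ≤ k →
        Metric.infDist (x k) A ≤ d * Metric.infDist (x k₀) A * lam ^ (k - k₀)) :
    ∃ (V : ℕ → EuclideanSpace ℝ (Fin n) → ℝ) (c₁ c₂ β : ℝ),
      0 < c₁ ∧ 0 < c₂ ∧ 0 < β ∧ β < 1 ∧
      (∀ k, ∀ ξ ∈ D,
        c₁ * Metric.infDist ξ A ^ 2 ≤ V k ξ ∧ V k ξ ≤ c₂ * Metric.infDist ξ A ^ 2) ∧
      (∀ k, ∀ ξ ∈ D, V (k + 1) (f k ξ) ≤ β ^ 2 * V k ξ) := by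
  obtain ⟨hlam0, hlam1⟩ := hlam
  set β : ℝ := (1 + lam) / 2 with hβdef
  have hβ0 : 0 < β := by positivity
  have hβ1 : β < 1 := by rw [hβdef]; linarith
  have hlamβ : lam < β := by rw [hβdef]; linarith
  set r : ℝ := (lam / β) ^ 2 with hrdef
  have hr0 : 0 ≤ r := by positivity
  have hr1 : r < 1 := by
    have h1 : lam / β < 1 := (div_lt_one hβ0).2 hlamβ
    have h2 : 0 < lam / β := by positivity
    calc r = (lam/β)^2 := rfl
      _ < 1 ^ 2 := by apply pow_lt_pow_left₀ h1 h2.le; norm_num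
      _ = 1 := one_pow 2
  obtain ⟨N, hN⟩ := exists_pow_lt_of_lt_one (show (0:ℝ) < 1 / d ^ 2 by positivity) hr1
  set M : ℕ := N + 1 with hMdef
  have hrM : d ^ 2 * r ^ M ≤ 1 := by
    have h1 : r ^ M ≤ r ^ N := pow_le_pow_of_le_one hr0 hr1.le (Nat.le_succ N)
    have h2 : d ^ 2 * r ^ N < d ^ 2 * (1 / d ^ 2) := by
      apply mul_lt_mul_of_pos_left hN (by positivity)
    have h3 : d ^ 2 * (1 / d ^ 2) = 1 := by field_simp
    nlinarith [sq_nonneg d]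
  set b : ℝ := (β ^ 2)⁻¹ with hbdef
  have hb0 : 0 < b := by positivity
  -- invariance of D along the flow
  have hmem : ∀ k (ξ : EuclideanSpace ℝ (Fin n)), ξ ∈ D → ∀ j, flowCL f k ξ j ∈ D := by
    intro k ξ hξ j
    induction j with
    | zero => exact hξ
    | succ j ih => exact hinv _ _ ih
  -- exponential decay along the flow
  have hdecay : ∀ k (ξ : EuclideanSpace ℝ (Fin n)), ξ ∈ D → ∀ j,
      Metric.infDist (flowCL f k ξ j) A ≤ d * Metric.infDist ξ A * lam ^ j := by
    intro k ξ hξ j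
    have hx0 : flowCL f k ξ (k - k) = ξ := by simp [flowCL]
    have hES' := hES k (fun m => flowCL f k ξ (m - k)) (by simpa [flowCL] using hξ)
      (fun m hm => by
        have h1 : m + 1 - k = (m - k) + 1 := by omega
        show flowCL f k ξ (m + 1 - k) = f m (flowCL f k ξ (m - k))
        rw [h1]
        show f (k + (m - k)) _ = f m _
        rw [show k + (m - k) = m from by omega])
      (k + j) (Nat.le_add_right _ _)
    simpa [flowCL] using hES'
  refine ⟨fun k ξ => ∑ j ∈ Finset.range M,
      b ^ j * Metric.infDist (flowCL f k ξ j) A ^ 2,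
    1, (M : ℝ) * d ^ 2, β, one_pos, by positivity, hβ0, hβ1, ?_, ?_⟩
  · intro k ξ hξ
    have hX0 : 0 ≤ Metric.infDist ξ A := Metric.infDist_nonneg
    constructor
    · rw [one_mul]
      have h0 : (0 : ℕ) ∈ Finset.range M := Finset.mem_range.2 (by omega)
      have := Finset.single_le_sum
        (f := fun j => b ^ j * Metric.infDist (flowCL f k ξ j) A ^ 2)
        (fun i _ => by positivity) h0
      simpa [flowCL] using this
    · calc ∑ j ∈ Finset.range M, b ^ j * Metric.infDist (flowCL f k ξ j) A ^ 2
          ≤ ∑ j ∈ Finset.range M, d ^ 2 * Metric.infDist ξ A ^ 2 := by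
            apply Finset.sum_le_sum
            intro j _
            have h1 : Metric.infDist (flowCL f k ξ j) A ≤ d * Metric.infDist ξ A * lam ^ j :=
              hdecay k ξ hξ j
            have h2 : Metric.infDist (flowCL f k ξ j) A ^ 2
                ≤ (d * Metric.infDist ξ A * lam ^ j) ^ 2 := by
              apply pow_le_pow_left₀ Metric.infDist_nonneg h1
            have h3 : b ^ j * (d * Metric.infDist ξ A * lam ^ j) ^ 2
                = d ^ 2 * Metric.infDist ξ A ^ 2 * r ^ j := by
              rw [hrdef, hbdef]
              exact aux_alg_CL β d (Metric.infDist ξ A) lam hβ0.ne' j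
            have h4 : r ^ j ≤ 1 := pow_le_one₀ hr0 hr1.le
            nlinarith [pow_pos hb0 j, sq_nonneg (d * Metric.infDist ξ A)]
      _ = (M : ℝ) * d ^ 2 * Metric.infDist ξ A ^ 2 := by
            rw [Finset.sum_const, Finset.card_range, nsmul_eq_mul]; ring
  · intro k ξ hξ
    show (∑ j ∈ Finset.range M, b ^ j * Metric.infDist (flowCL f (k+1) (f k ξ) j) A ^ 2)
        ≤ β ^ 2 * ∑ j ∈ Finset.range M, b ^ j * Metric.infDist (flowCL f k ξ j) A ^ 2
    set g : ℕ → ℝ := fun j => Metric.infDist (flowCL f k ξ j) A ^ 2 with hgdef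
    have hVshift : (∑ j ∈ Finset.range M,
        b ^ j * Metric.infDist (flowCL f (k+1) (f k ξ) j) A ^ 2)
        = ∑ j ∈ Finset.range M, b ^ j * g (j + 1) := by
      apply Finset.sum_congr rfl
      intro j _
      rw [flowCL_shift]
    rw [hVshift]
    have hsplit : ∑ j ∈ Finset.range (M + 1), b ^ j * g j
        = (∑ j ∈ Finset.range M, b ^ (j+1) * g (j + 1)) + b ^ 0 * g 0 :=
      Finset.sum_range_succ' _ M
    have hsplit2 : ∑ j ∈ Finset.range (M + 1), b ^ j * g j
        = (∑ j ∈ Finset.range M, b ^ j * g j) + b ^ M * g M :=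
      Finset.sum_range_succ _ M
    have hbb : ∀ j : ℕ, b ^ j = β ^ 2 * b ^ (j + 1) := by
      intro j
      rw [hbdef]
      field_simp
      have hq : (1 / β ^ 2) ^ (j + 1) = (1 / β ^ 2) ^ j * (1 / β ^ 2) := pow_succ _ _
      rw [hq, mul_comm, mul_assoc, one_div_mul_cancel (by positivity), mul_one]
    have hkey : ∑ j ∈ Finset.range M, b ^ j * g (j + 1)
        = β ^ 2 * ((∑ j ∈ Finset.range M, b ^ j * g j) + b ^ M * g M - g 0) := by
      calc ∑ j ∈ Finset.range M, b ^ j * g (j + 1)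
          = ∑ j ∈ Finset.range M, β ^ 2 * (b ^ (j+1) * g (j + 1)) := by
            apply Finset.sum_congr rfl
            intro j _
            rw [← mul_assoc, ← hbb]
        _ = β ^ 2 * ∑ j ∈ Finset.range M, b ^ (j+1) * g (j + 1) := by
            rw [Finset.mul_sum]
        _ = β ^ 2 * ((∑ j ∈ Finset.range M, b ^ j * g j) + b ^ M * g M - g 0) := by
            congr 1
            have : (∑ j ∈ Finset.range M, b ^ (j+1) * g (j + 1))
                = (∑ j ∈ Finset.range (M+1), b ^ j * g j) - b ^ 0 * g 0 := by
              rw [hsplit]; ring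
            rw [this, hsplit2]
            simp
    rw [hkey]
    have hlast : b ^ M * g M ≤ g 0 := by
      have h1 : Metric.infDist (flowCL f k ξ M) A ≤ d * Metric.infDist ξ A * lam ^ M :=
        hdecay k ξ hξ M
      have h2 : g M ≤ (d * Metric.infDist ξ A * lam ^ M) ^ 2 :=
        pow_le_pow_left₀ Metric.infDist_nonneg h1 2
      have h3 : b ^ M * (d * Metric.infDist ξ A * lam ^ M) ^ 2
          = d ^ 2 * r ^ M * Metric.infDist ξ A ^ 2 := by
        rw [hrdef, hbdef]
        rw [aux_alg_CL β d (Metric.infDist ξ A) lam hβ0.ne' M]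
        ring
      have hg0 : g 0 = Metric.infDist ξ A ^ 2 := by simp [hgdef, flowCL]
      have hX0 : (0:ℝ) ≤ Metric.infDist ξ A ^ 2 := by positivity
      have h4 : b ^ M * g M ≤ d ^ 2 * r ^ M * Metric.infDist ξ A ^ 2 := by
        calc b ^ M * g M ≤ b ^ M * (d * Metric.infDist ξ A * lam ^ M) ^ 2 := by
              apply mul_le_mul_of_nonneg_left h2 (by positivity)
          _ = d ^ 2 * r ^ M * Metric.infDist ξ A ^ 2 := h3
      calc b ^ M * g M ≤ d ^ 2 * r ^ M * Metric.infDist ξ A ^ 2 := h4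
        _ ≤ 1 * Metric.infDist ξ A ^ 2 := by
            apply mul_le_mul_of_nonneg_right hrM hX0
        _ = g 0 := by rw [one_mul, hg0]
    have : (∑ j ∈ Finset.range M, b ^ j * g j) + b ^ M * g M - g 0
        ≤ ∑ j ∈ Finset.range M, b ^ j * g j := by linarith
    calc β ^ 2 * ((∑ j ∈ Finset.range M, b ^ j * g j) + b ^ M * g M - g 0)
        ≤ β ^ 2 * ∑ j ∈ Finset.range M, b ^ j * g j := by
          apply mul_le_mul_of_nonneg_left this (by positivity)
      _ = β ^ 2 * ∑ j ∈ Finset.range M, b ^ j * Metric.infDist (flowCL f k ξ j) A ^ 2 := rfl
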